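/- Let f : ℕ → ℝ be a function (an arithmetic function) for which there exist constants C > 0 and d ∈ ℕ with |f(n)| ≤ C·n^d for all n ≥ 1. Then for every real number x with 0 < x < 1, we have - ∑_{k=1}^{∞} (f(k)/k) · log(1 - x^k) = ∑_{n=1}^{∞} ((1 * f)(n)/n) · x^n, where (1 * f)(n) = ∑_{d | n} f(d) denotes the Dirichlet convolution of the constant function 1 with f. -/

import Mathlib

open Real

/-- For an arithmetic function `f` of polynomial growth and 0 < x < 1,
-∑_{k=1}^∞ (f(k)/k) log(1 - x^k) = ∑_{n=1}^∞ ((1*f)(n)/n) x^n, where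
(1*f)(n) = ∑_{d ∣ n} f(d). -/
theorem log_series_eq_divisor_sum_series (f : ℕ → ℝ) (C : ℝ) (hC : 0 < C) (d : ℕ)
    (hf : ∀ n : ℕ, 1 ≤ n → |f n| ≤ C * (n : ℝ) ^ d)
    (x : ℝ) (hx0 : 0 < x) (hx1 : x < 1) :
    -∑' k : ℕ, (f (k + 1) / (k + 1 : ℝ)) * Real.log (1 - x ^ (k + 1))
      = ∑' n : ℕ, ((∑ d ∈ Nat.divisors (n + 1), f d) / (n + 1 : ℝ)) * x ^ (n + 1) := by
  set T : ℕ × ℕ → ℝ := fun p => (if p.1 = 0 then 0 else f p.1) / ((p.1 * p.2 : ℕ) : ℝ)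
    * x ^ (p.1 * p.2) with hT
  have hT0 : ∀ p : ℕ × ℕ, p.1 = 0 ∨ p.2 = 0 → T p = 0 := by
    rintro ⟨a, b⟩ (rfl | rfl) <;> simp [hT]
  have hxabs : |x| < 1 := by rw [abs_of_pos hx0]; exact hx1
  -- summability of T
  have hsumT : Summable T := by
    have hF : Summable (fun k : ℕ => (C / x * ((k : ℝ) ^ d * x ^ k))) := by
      refine Summable.mul_left _ ?_
      exact summable_pow_mul_geometric_of_norm_lt_one d (by rwa [Real.norm_eq_abs])
    have hG : Summable (fun j : ℕ => x ^ j) := summable_geometric_of_lt_one hx0.le hx1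
    have hM : Summable (fun p : ℕ × ℕ =>
        (C / x * ((p.1 : ℝ) ^ d * x ^ p.1)) * x ^ p.2) :=
      hF.mul_of_nonneg hG (fun k => by positivity) (fun j => by positivity)
    refine Summable.of_nonneg_of_le (fun p => abs_nonneg (T p)) (fun p => ?_) hM |>.of_abs
    rcases p with ⟨a, b⟩
    rcases Nat.eq_zero_or_pos a with rfl | ha
    · simp only [hT0 (0, b) (Or.inl rfl), abs_zero]; positivity
    rcases Nat.eq_zero_or_pos b with rfl | hb
    · simp only [hT0 (a, 0) (Or.inr rfl), abs_zero]; positivity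
    have hane : a ≠ 0 := ha.ne'
    have hb1 : b = (b - 1) + 1 := (Nat.succ_pred_eq_of_pos hb).symm
    have h1 : |T (a, b)| = |f a| / ((a * b : ℕ) : ℝ) * x ^ (a * b) := by
      simp only [hT, hane, if_false]
      rw [abs_mul, abs_div, abs_of_pos (pow_pos hx0 _), Nat.abs_cast]
    have h2 : |f a| / ((a * b : ℕ) : ℝ) ≤ C * (a : ℝ) ^ d := by
      calc |f a| / ((a * b : ℕ) : ℝ) ≤ |f a| / 1 := by
            apply div_le_div_of_nonneg_left (abs_nonneg _) one_pos
            exact_mod_cast Nat.one_le_iff_ne_zero.mpr (by positivity)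
        _ = |f a| := div_one _
        _ ≤ C * (a : ℝ) ^ d := hf a ha
    have h3 : x ^ (a * b) ≤ x ^ (a + (b - 1)) := by
      apply pow_le_pow_of_le_one hx0.le hx1.le
      calc a + (b - 1) ≤ a * (b - 1) + a := by
            have : b - 1 ≤ a * (b - 1) := Nat.le_mul_of_pos_left _ ha
            omega
        _ = a * ((b - 1) + 1) := by ring
        _ = a * b := by rw [← hb1]
    calc |T (a, b)| = |f a| / ((a * b : ℕ) : ℝ) * x ^ (a * b) := h1
      _ ≤ (C * (a : ℝ) ^ d) * x ^ (a + (b - 1)) :=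
          mul_le_mul h2 h3 (by positivity) (by positivity)
      _ = C / x * ((a : ℝ) ^ d * x ^ a) * x ^ b := by
          rw [pow_add]
          nth_rewrite 2 [hb1]
          rw [pow_succ]
          field_simp
  -- the sum of T over pairs, fiberwise in the first coordinate = LHS series
  set S : ℝ := ∑' p : ℕ × ℕ, T p with hS
  -- inner sums over j for fixed k
  have hinner : ∀ k : ℕ, HasSum (fun j => T (k, j))
      (if k = 0 then 0 else f k / (k : ℝ) * (-Real.log (1 - x ^ k))) := by
    intro k
    rcases Nat.eq_zero_or_pos k with rfl | hk
    · rw [if_pos rfl, show (fun j => T (0, j)) = fun _ => (0:ℝ) from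
        funext fun j => hT0 (0, j) (Or.inl rfl)]
      exact hasSum_zero
    have hkne : k ≠ 0 := hk.ne'
    have hxk : |x ^ k| < 1 := by
      rw [abs_of_pos (pow_pos hx0 _)]
      exact pow_lt_one₀ hx0.le hx1 hkne
    have h := (Real.hasSum_pow_div_log_of_abs_lt_one hxk).mul_left (f k / (k : ℝ))
    have heq : (fun j : ℕ => f k / (k : ℝ) * ((x ^ k) ^ (j + 1) / ((j : ℝ) + 1)))
        = fun j : ℕ => T (k, j + 1) := by
      funext j
      simp only [hT, hkne, if_neg, ← pow_mul]
      have hknz : (k : ℝ) ≠ 0 := Nat.cast_ne_zero.mpr hkne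
      have hjnz : ((j : ℝ) + 1) ≠ 0 := by positivity
      push_cast
      field_simp
    rw [heq] at h
    have := (hasSum_nat_add_iff (f := fun j => T (k, j)) 1).mp h
    simpa [hT0 (k, 0) (Or.inr rfl), if_neg hkne] using this
  have houter : HasSum (fun k : ℕ =>
      (if k = 0 then 0 else f k / (k : ℝ) * (-Real.log (1 - x ^ k)))) S :=
    hsumT.hasSum.prod_fiberwise hinner
  -- LHS equals S
  have hLHS : -∑' k : ℕ, (f (k + 1) / (k + 1 : ℝ)) * Real.log (1 - x ^ (k + 1)) = S := by
    have h1 : HasSum (fun k : ℕ =>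
        (if k + 1 = 0 then 0 else f (k + 1) / ((k + 1 : ℕ) : ℝ)
          * (-Real.log (1 - x ^ (k + 1))))) S := by
      refine (hasSum_nat_add_iff (f := fun k =>
        (if k = 0 then 0 else f k / (k : ℝ) * (-Real.log (1 - x ^ k)))) 1).mpr ?_
      simpa using houter
    have h2 : HasSum (fun k : ℕ =>
        -((f (k + 1) / (k + 1 : ℝ)) * Real.log (1 - x ^ (k + 1)))) S := by
      have : (fun k : ℕ => (if k + 1 = 0 then 0 else f (k + 1) / ((k + 1 : ℕ) : ℝ)
          * (-Real.log (1 - x ^ (k + 1)))))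
          = fun k : ℕ => -((f (k + 1) / (k + 1 : ℝ)) * Real.log (1 - x ^ (k + 1))) := by
        funext k
        rw [if_neg (Nat.succ_ne_zero k)]
        push_cast
        ring
      exact this ▸ h1
    rw [← h2.tsum_eq, tsum_neg]
  -- fiberwise over products: RHS
  have hfiber : HasSum (fun n : ℕ =>
      ∑' q : (fun p : ℕ × ℕ => p.1 * p.2) ⁻¹' {n}, T q) S :=
    hsumT.hasSum.tsum_fiberwise (fun p => p.1 * p.2)
  have hfib_eq : ∀ n : ℕ, (∑' q : (fun p : ℕ × ℕ => p.1 * p.2) ⁻¹' {n}, T q)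
      = (∑ d ∈ Nat.divisors n, f d) / (n : ℝ) * x ^ n := by
    intro n
    rcases Nat.eq_zero_or_pos n with rfl | hn
    · have : ∀ q : (fun p : ℕ × ℕ => p.1 * p.2) ⁻¹' {(0 : ℕ)}, T q = 0 := by
        rintro ⟨⟨a, b⟩, hq⟩
        simp only [Set.mem_preimage, Set.mem_singleton_iff, Nat.mul_eq_zero] at hq
        exact hT0 (a, b) hq
      simp [this, tsum_zero]
    have hnne : n ≠ 0 := hn.ne'
    rw [show (fun p : ℕ × ℕ => p.1 * p.2) ⁻¹' {n} = ↑n.divisorsAntidiagonal by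
        ext; simp [hnne, Nat.mem_divisorsAntidiagonal],
      Finset.tsum_subtype' n.divisorsAntidiagonal T]
    have : ∀ p ∈ n.divisorsAntidiagonal, T p = f p.1 / (n : ℝ) * x ^ n := by
      rintro ⟨a, b⟩ hp
      obtain ⟨hab, -⟩ := Nat.mem_divisorsAntidiagonal.mp hp
      have ha : a ≠ 0 := (Nat.ne_zero_of_mem_divisorsAntidiagonal hp).1
      simp only [hT, ha, if_false]
      rw [show (a, b).1 * (a, b).2 = n from hab]
    rw [Finset.sum_congr rfl this]
    rw [Nat.sum_divisorsAntidiagonal (fun a b => f a / (n : ℝ) * x ^ n)]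
    rw [← Finset.sum_mul, ← Finset.sum_div]
  rw [hLHS]
  have hR : HasSum (fun n : ℕ => (∑ d ∈ Nat.divisors n, f d) / (n : ℝ) * x ^ n) S :=
    (funext hfib_eq : _) ▸ hfiber
  have hR1 : HasSum (fun n : ℕ =>
      (∑ d ∈ Nat.divisors (n + 1), f d) / ((n + 1 : ℕ) : ℝ) * x ^ (n + 1)) S := by
    refine (hasSum_nat_add_iff (f := fun n =>
      (∑ d ∈ Nat.divisors n, f d) / (n : ℝ) * x ^ n) 1).mpr ?_
    simpa using hR
  rw [← hR1.tsum_eq]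
  push_cast
  rfl
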